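/- For any two quantum channels Φ, Ψ from a d-dimensional system to another system, the trace distance between their Choi states satisfies (1/(2d)) D_⋄(Φ,Ψ) ≤ D_t(ω_Φ, ω_Ψ) ≤ (1/2) D_⋄(Φ,Ψ), where D_⋄ is the diamond-norm distance. -/

import Mathlib

open Matrix BigOperators Kronecker
open scoped Classical ComplexOrder

/-- Square root of a positive semidefinite matrix, as `Matrix.PosSemidef.sqrt` was defined in
Mathlib of December 2024 (since removed). -/
noncomputable def Matrix.PosSemidef.sqrt {n 𝕜 : Type*} [Fintype n] [DecidableEq n] [RCLike 𝕜]
    {A : Matrix n n 𝕜} (hA : A.PosSemidef) : Matrix n n 𝕜 :=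
  hA.1.eigenvectorUnitary.1 * diagonal ((↑) ∘ (√·) ∘ hA.1.eigenvalues) *
    (star hA.1.eigenvectorUnitary : Matrix n n 𝕜)

namespace QCap

/-- Trace norm: `‖A‖₁ = tr √(AᴴA)`. -/
noncomputable def traceNorm {ι : Type*} [Fintype ι] [DecidableEq ι] (A : Matrix ι ι ℂ) : ℝ :=
  ((Matrix.posSemidef_conjTranspose_mul_self A).sqrt.trace).re

/-- Trace distance `D_t(ρ,σ) = ‖ρ-σ‖₁ / 2`. -/
noncomputable def traceDist {ι : Type*} [Fintype ι] [DecidableEq ι] (ρ σ : Matrix ι ι ℂ) : ℝ :=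
  traceNorm (ρ - σ) / 2

/-- von Neumann entropy via eigenvalues, `H(ρ) = -∑ λᵢ log λᵢ`. -/
noncomputable def vnEntropy {ι : Type*} [Fintype ι] [DecidableEq ι] (ρ : Matrix ι ι ℂ) : ℝ :=
  if h : ρ.IsHermitian then ∑ i, Real.negMulLog (h.eigenvalues i) else 0

/-- A density operator: positive semidefinite with unit trace. -/
def IsDensity {ι : Type*} [Fintype ι] (ρ : Matrix ι ι ℂ) : Prop :=
  ρ.PosSemidef ∧ ρ.trace = 1

/-- Kraus condition `∑ Kᵢᴴ Kᵢ = 1` (trace preservation for a CP map). -/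
def IsKraus {ι κ α : Type*} [Fintype ι] [DecidableEq ι] [Fintype κ] [Fintype α]
    (K : κ → Matrix α ι ℂ) : Prop :=
  ∑ k, (K k)ᴴ * K k = 1

/-- Channel action `Φ(ρ) = ∑ Kᵢ ρ Kᵢᴴ`. -/
noncomputable def channelApply {ι κ α : Type*} [Fintype ι] [Fintype κ]
    (K : κ → Matrix α ι ℂ) (ρ : Matrix ι ι ℂ) : Matrix α α ℂ :=
  ∑ k, K k * ρ * (K k)ᴴ

/-- Choi state `ω_Φ = (Φ ⊗ id)(|ω⟩⟨ω|)` with `|ω⟩ = (1/√d) ∑ᵢ |ii⟩`. -/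
noncomputable def choiState {ι κ α : Type*} [Fintype ι] [DecidableEq ι] [Fintype κ]
    (K : κ → Matrix α ι ℂ) : Matrix (α × ι) (α × ι) ℂ :=
  (Fintype.card ι : ℂ)⁻¹ •
    ∑ i : ι, ∑ j : ι,
      (channelApply K (Matrix.single i j 1)) ⊗ₖ (Matrix.single i j 1)

/-- Partial trace over the first tensor factor. -/
noncomputable def ptraceFst {α β : Type*} [Fintype α]
    (M : Matrix (α × β) (α × β) ℂ) : Matrix β β ℂ :=
  Matrix.of fun i j => ∑ a, M (a, i) (a, j)

/-- Partial trace over the second tensor factor. -/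
noncomputable def ptraceSnd {α β : Type*} [Fintype β]
    (M : Matrix (α × β) (α × β) ℂ) : Matrix α α ℂ :=
  Matrix.of fun a b => ∑ i, M (a, i) (b, i)

/-- Fidelity `F(ρ,σ) = (tr √(√ρ σ √ρ))²`. -/
noncomputable def fidelity {ι : Type*} [Fintype ι] [DecidableEq ι] (ρ σ : Matrix ι ι ℂ) : ℝ :=
  if hρ : ρ.PosSemidef then
    if h : (hρ.sqrt * σ * hρ.sqrt).PosSemidef then ((h.sqrt.trace).re) ^ 2 else 0
  else 0

/-- Coherent information of the channel at the maximally mixed input: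
`I(Φ) = H(Φ(π_d)) - H(ω_Φ)`. -/
noncomputable def cohInfo {ι κ α : Type*} [Fintype ι] [DecidableEq ι] [Fintype κ]
    [Fintype α] [DecidableEq α] (K : κ → Matrix α ι ℂ) : ℝ :=
  vnEntropy (channelApply K ((Fintype.card ι : ℂ)⁻¹ • (1 : Matrix ι ι ℂ)))
    - vnEntropy (choiState K)

end QCap

namespace QCap
open Matrix Kronecker

/-- `(Φ ⊗ id)` acting on a state of the input system tensored with an ancilla copy. -/
noncomputable def extApply {ι κ α : Type*} [Fintype ι] [DecidableEq ι] [Fintype κ]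
    (K : κ → Matrix α ι ℂ) (M : Matrix (ι × ι) (ι × ι) ℂ) : Matrix (α × ι) (α × ι) ℂ :=
  ∑ k, (K k ⊗ₖ (1 : Matrix ι ι ℂ)) * M * (K k ⊗ₖ (1 : Matrix ι ι ℂ))ᴴ

/-- Diamond-norm distance: supremum over states on the extended system of the
trace norm of the difference of the extended outputs. -/
noncomputable def diamondDist {ι κ κ' α : Type*} [Fintype ι] [DecidableEq ι]
    [Fintype κ] [Fintype κ'] [Fintype α] [DecidableEq α]
    (K : κ → Matrix α ι ℂ) (L : κ' → Matrix α ι ℂ) : ℝ :=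
  sSup {x | ∃ M : Matrix (ι × ι) (ι × ι) ℂ, IsDensity M ∧
    x = traceNorm (extApply K M - extApply L M)}

end QCap

namespace QCap
open Matrix Kronecker

section general
variable {n : Type*} [Fintype n] [DecidableEq n]

/-- squared euclidean norm of a complex vector -/
noncomputable def vsq {n : Type*} [Fintype n] (x : n → ℂ) : ℝ :=
  (dotProduct (star x) x).re

lemma star_dot_self_term (x : n → ℂ) (i : n) :
    (star x) i * x i = (Complex.normSq (x i) : ℂ) := by
  simp [Complex.normSq_eq_conj_mul_self]

lemma vsq_eq_sum (x : n → ℂ) : vsq x = ∑ i, Complex.normSq (x i) := by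
  unfold vsq
  rw [dotProduct, Complex.re_sum]
  apply Finset.sum_congr rfl
  intro i _
  rw [star_dot_self_term, Complex.ofReal_re]

lemma vsq_nonneg (x : n → ℂ) : 0 ≤ vsq x := by
  rw [vsq_eq_sum]
  exact Finset.sum_nonneg fun i _ => Complex.normSq_nonneg _

lemma inner_equiv_symm_aux (x y : n → ℂ) :
    inner ℂ ((WithLp.equiv 2 (n → ℂ)).symm x) ((WithLp.equiv 2 (n → ℂ)).symm y)
      = dotProduct (star x) y := by
  rw [dotProduct_comm]; rfl

lemma cauchy_schwarz_dot (x y : n → ℂ) :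
    ‖(dotProduct (star x) y)‖ ≤ Real.sqrt (vsq x) * Real.sqrt (vsq y) := by
  have h := norm_inner_le_norm (𝕜 := ℂ) ((WithLp.equiv 2 (n → ℂ)).symm x)
    ((WithLp.equiv 2 (n → ℂ)).symm y)
  rw [inner_equiv_symm_aux] at h
  have hx : ‖(WithLp.equiv 2 (n → ℂ)).symm x‖ = Real.sqrt (vsq x) := by
    rw [norm_eq_sqrt_re_inner (𝕜 := ℂ), inner_equiv_symm_aux]; rfl
  have hy : ‖(WithLp.equiv 2 (n → ℂ)).symm y‖ = Real.sqrt (vsq y) := by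
    rw [norm_eq_sqrt_re_inner (𝕜 := ℂ), inner_equiv_symm_aux]; rfl
  rw [hx, hy] at h
  exact h

/-- operator contraction -/
def Contraction {n : Type*} [Fintype n] (C : Matrix n n ℂ) : Prop :=
  ∀ x : n → ℂ, vsq (C *ᵥ x) ≤ vsq x

lemma Contraction.mul {C D : Matrix n n ℂ} (hC : Contraction C) (hD : Contraction D) :
    Contraction (C * D) := fun x => by
  rw [← Matrix.mulVec_mulVec]
  exact (hC _).trans (hD x)

lemma Contraction.neg {C : Matrix n n ℂ} (hC : Contraction C) : Contraction (-C) := fun x => by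
  rw [Matrix.neg_mulVec, vsq_eq_sum, vsq_eq_sum]
  simpa [vsq_eq_sum] using hC x

lemma vsq_mulVec_unitary {U : Matrix n n ℂ} (hU : Uᴴ * U = 1) (x : n → ℂ) :
    vsq (U *ᵥ x) = vsq x := by
  unfold vsq
  rw [Matrix.star_mulVec, Matrix.dotProduct_mulVec, Matrix.vecMul_vecMul, hU,
    Matrix.vecMul_one]

lemma contraction_unitary_conj {U : Matrix n n ℂ} (hU : Uᴴ * U = 1) (hU' : U * Uᴴ = 1)
    {s : n → ℂ} (hs : ∀ i, ‖s i‖ ≤ 1) :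
    Contraction (U * Matrix.diagonal s * Uᴴ) := by
  intro x
  rw [show U * Matrix.diagonal s * Uᴴ = U * (Matrix.diagonal s * Uᴴ) from by rw [Matrix.mul_assoc],
    ← Matrix.mulVec_mulVec, vsq_mulVec_unitary hU, ← Matrix.mulVec_mulVec]
  have hdiag : ∀ y : n → ℂ, vsq (Matrix.diagonal s *ᵥ y) ≤ vsq y := by
    intro y
    rw [vsq_eq_sum, vsq_eq_sum]
    apply Finset.sum_le_sum
    intro i _
    rw [Matrix.mulVec_diagonal, Complex.normSq_mul]
    have h1 : Complex.normSq (s i) ≤ 1 := by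
      rw [Complex.normSq_eq_norm_sq]
      exact pow_le_one₀ (norm_nonneg _) (hs i)
    nlinarith [Complex.normSq_nonneg (y i), Complex.normSq_nonneg (s i)]
  calc vsq (Matrix.diagonal s *ᵥ (Uᴴ *ᵥ x)) ≤ vsq (Uᴴ *ᵥ x) := hdiag _
    _ = vsq x := by
        have h : Uᴴᴴ * Uᴴ = 1 := by rw [Matrix.conjTranspose_conjTranspose]; exact hU'
        exact vsq_mulVec_unitary h x

lemma unitary_conj_props {A : Matrix n n ℂ} (hA : A.IsHermitian) :
    ((Matrix.IsHermitian.eigenvectorUnitary hA : Matrix n n ℂ))ᴴ *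
      (Matrix.IsHermitian.eigenvectorUnitary hA : Matrix n n ℂ) = 1 ∧
    (Matrix.IsHermitian.eigenvectorUnitary hA : Matrix n n ℂ) *
      ((Matrix.IsHermitian.eigenvectorUnitary hA : Matrix n n ℂ))ᴴ = 1 := by
  constructor
  · rw [← Matrix.star_eq_conjTranspose]
    exact (Matrix.mem_unitaryGroup_iff').mp (Matrix.IsHermitian.eigenvectorUnitary hA).2
  · rw [← Matrix.star_eq_conjTranspose]
    exact (Matrix.mem_unitaryGroup_iff).mp (Matrix.IsHermitian.eigenvectorUnitary hA).2

open scoped MatrixOrder in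
lemma psd_sqrt_eq_of_sq {A S : Matrix n n ℂ} (hA : A.PosSemidef) (hS : S.PosSemidef)
    (h : S ^ 2 = A) : S = hA.sqrt := by
  have e : hA.sqrt = CFC.sqrt A := by
    rw [CFC.sqrt_eq_cfc, cfc_nnreal_eq_real _ A hA.nonneg, hA.1.cfc_eq]
    simp only [Matrix.PosSemidef.sqrt, IsHermitian.cfc, Unitary.conjStarAlgAut_apply]
    congr 3
    funext i
    simp [Real.coe_sqrt, Real.coe_toNNReal', max_eq_left (hA.eigenvalues_nonneg i)]
  rw [e]
  exact (CFC.sqrt_unique (by rw [← sq]; exact h) hS.nonneg).symm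

lemma traceNorm_eq_sum_abs {A : Matrix n n ℂ} (hA : A.IsHermitian) :
    traceNorm A = ∑ i, |hA.eigenvalues i| := by
  set U : Matrix n n ℂ := (Matrix.IsHermitian.eigenvectorUnitary hA : Matrix n n ℂ) with hUdef
  have hU : Uᴴ * U = 1 := (unitary_conj_props hA).1
  set S : Matrix n n ℂ := U * Matrix.diagonal (fun i => (Complex.ofReal |hA.eigenvalues i|)) * Uᴴ
    with hSdef
  have hSpsd : S.PosSemidef := by
    apply Matrix.PosSemidef.mul_mul_conjTranspose_same
    exact Matrix.posSemidef_diagonal_iff.mpr fun i =>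
      Complex.zero_le_real.mpr (abs_nonneg _)
  have hspec : A = U * Matrix.diagonal (RCLike.ofReal ∘ hA.eigenvalues) * Uᴴ := by
    rw [← Matrix.star_eq_conjTranspose]; exact hA.spectral_theorem
  have hS2 : S ^ 2 = Aᴴ * A := by
    rw [hA.eq, pow_two, hSdef]
    conv_rhs => rw [hspec]
    calc (U * Matrix.diagonal (fun i => (Complex.ofReal |hA.eigenvalues i|)) * Uᴴ) *
          (U * Matrix.diagonal (fun i => (Complex.ofReal |hA.eigenvalues i|)) * Uᴴ)
        = U * (Matrix.diagonal (fun i => (Complex.ofReal |hA.eigenvalues i|)) * (Uᴴ * U) *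
            Matrix.diagonal (fun i => (Complex.ofReal |hA.eigenvalues i|))) * Uᴴ := by
          simp only [Matrix.mul_assoc]
      _ = U * Matrix.diagonal (RCLike.ofReal ∘ hA.eigenvalues) * Uᴴ *
            (U * Matrix.diagonal (RCLike.ofReal ∘ hA.eigenvalues) * Uᴴ) := by
          rw [hU, Matrix.mul_one, Matrix.diagonal_mul_diagonal]
          calc U * Matrix.diagonal (fun i => (Complex.ofReal |hA.eigenvalues i|) *
                  (Complex.ofReal |hA.eigenvalues i|)) * Uᴴ
              = U * (Matrix.diagonal (RCLike.ofReal ∘ hA.eigenvalues) * (Uᴴ * U) *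
                  Matrix.diagonal (RCLike.ofReal ∘ hA.eigenvalues)) * Uᴴ := by
                rw [hU, Matrix.mul_one, Matrix.diagonal_mul_diagonal]
                have hfun : (fun i => Complex.ofReal |hA.eigenvalues i|
                      * Complex.ofReal |hA.eigenvalues i|)
                    = fun i => (RCLike.ofReal ∘ hA.eigenvalues) i
                      * (RCLike.ofReal ∘ hA.eigenvalues) i := by
                  funext i
                  simp only [Function.comp_apply, ← Complex.ofReal_mul, abs_mul_abs_self]
                  norm_cast
                rw [hfun]
            _ = _ := by simp only [Matrix.mul_assoc]
  have hsqrt : S = (Matrix.posSemidef_conjTranspose_mul_self A).sqrt :=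
    psd_sqrt_eq_of_sq (Matrix.posSemidef_conjTranspose_mul_self A) hSpsd hS2
  rw [traceNorm, ← hsqrt, hSdef, Matrix.trace_mul_cycle, hU, Matrix.one_mul,
    Matrix.trace_diagonal]
  rw [Complex.re_sum]
  norm_num

lemma trace_eq_sum_eig {A : Matrix n n ℂ} (hA : A.IsHermitian) :
    A.trace = ∑ i, (hA.eigenvalues i : ℂ) := by
  have hspec : A = (Matrix.IsHermitian.eigenvectorUnitary hA : Matrix n n ℂ) *
      Matrix.diagonal (RCLike.ofReal ∘ hA.eigenvalues) *
      ((Matrix.IsHermitian.eigenvectorUnitary hA : Matrix n n ℂ))ᴴ := by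
    rw [← Matrix.star_eq_conjTranspose]; exact hA.spectral_theorem
  have hU := (unitary_conj_props hA).1
  conv_lhs => rw [hspec]
  rw [Matrix.trace_mul_cycle, hU, Matrix.one_mul, Matrix.trace_diagonal]
  rfl

lemma traceNorm_psd_eq_trace_re {A : Matrix n n ℂ} (hA : A.PosSemidef) :
    traceNorm A = A.trace.re := by
  rw [traceNorm_eq_sum_abs hA.1, trace_eq_sum_eig hA.1, Complex.re_sum]
  apply Finset.sum_congr rfl
  intro i _
  simp [abs_of_nonneg (hA.eigenvalues_nonneg i)]

/-- duality upper bound -/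
lemma re_trace_contraction_le {A : Matrix n n ℂ} (hA : A.IsHermitian)
    {C : Matrix n n ℂ} (hC : Contraction C) :
    (Matrix.trace (C * A)).re ≤ traceNorm A := by
  set U : Matrix n n ℂ := (Matrix.IsHermitian.eigenvectorUnitary hA : Matrix n n ℂ) with hUdef
  obtain ⟨hU, hU'⟩ := unitary_conj_props hA
  have hspec : A = U * Matrix.diagonal (RCLike.ofReal ∘ hA.eigenvalues) * Uᴴ := by
    rw [← Matrix.star_eq_conjTranspose]; exact hA.spectral_theorem
  have htr : Matrix.trace (C * A)
      = ∑ i, (Uᴴ * C * U) i i * (hA.eigenvalues i : ℂ) := by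
    conv_lhs => rw [hspec]
    rw [show C * (U * Matrix.diagonal (RCLike.ofReal ∘ hA.eigenvalues) * Uᴴ)
        = (C * U) * Matrix.diagonal (RCLike.ofReal ∘ hA.eigenvalues) * Uᴴ from by
      simp only [Matrix.mul_assoc]]
    rw [Matrix.trace_mul_cycle]
    rw [Matrix.trace]
    apply Finset.sum_congr rfl
    intro i _
    rw [Matrix.diag_apply, show Uᴴ * (C * U) = Uᴴ * C * U from by rw [Matrix.mul_assoc],
      Matrix.mul_diagonal]
    rfl
  have hdiagbd : ∀ i, ‖(Uᴴ * C * U) i i‖ ≤ 1 := by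
    intro i
    set u : n → ℂ := fun j => U j i with hu
    have h1 : (Uᴴ * C * U) i i = dotProduct (star u) (C *ᵥ u) := by
      rw [Matrix.mul_assoc, Matrix.mul_apply]
      simp only [Matrix.conjTranspose_apply, dotProduct, Pi.star_apply, hu,
        Matrix.mul_apply, Matrix.mulVec, dotProduct]
    have hvsqu : vsq u = 1 := by
      have h2 : dotProduct (star u) u = (Uᴴ * U) i i := by
        rw [Matrix.mul_apply]
        simp [Matrix.conjTranspose_apply, dotProduct, hu]
      unfold vsq
      rw [h2, hU]
      simp [Matrix.one_apply]
    have h5 := cauchy_schwarz_dot u (C *ᵥ u)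
    rw [h1]
    refine h5.trans ?_
    have h2 : Real.sqrt (vsq (C *ᵥ u)) ≤ 1 := by
      rw [show (1:ℝ) = Real.sqrt 1 from (Real.sqrt_one).symm]
      apply Real.sqrt_le_sqrt
      exact (hC u).trans (le_of_eq hvsqu)
    have h3 : Real.sqrt (vsq u) = 1 := by rw [hvsqu, Real.sqrt_one]
    rw [h3, one_mul]; exact h2
  rw [htr, Complex.re_sum, traceNorm_eq_sum_abs hA]
  apply Finset.sum_le_sum
  intro i _
  have h4 : ((Uᴴ * C * U) i i * (hA.eigenvalues i : ℂ)).re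
      = ((Uᴴ * C * U) i i).re * hA.eigenvalues i := by
    rw [mul_comm, Complex.re_ofReal_mul, mul_comm]
  rw [h4]
  calc ((Uᴴ * C * U) i i).re * hA.eigenvalues i
      ≤ |((Uᴴ * C * U) i i).re * hA.eigenvalues i| := le_abs_self _
    _ = |((Uᴴ * C * U) i i).re| * |hA.eigenvalues i| := abs_mul _ _
    _ ≤ 1 * |hA.eigenvalues i| := by
        apply mul_le_mul_of_nonneg_right _ (abs_nonneg _)
        exact (Complex.abs_re_le_norm _).trans (hdiagbd i)
    _ = |hA.eigenvalues i| := one_mul _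

/-- duality: attained -/
lemma exists_contraction_trace_eq {A : Matrix n n ℂ} (hA : A.IsHermitian) :
    ∃ C : Matrix n n ℂ, Contraction C ∧ (Matrix.trace (C * A)).re = traceNorm A := by
  set U : Matrix n n ℂ := (Matrix.IsHermitian.eigenvectorUnitary hA : Matrix n n ℂ) with hUdef
  obtain ⟨hU, hU'⟩ := unitary_conj_props hA
  have hspec : A = U * Matrix.diagonal (RCLike.ofReal ∘ hA.eigenvalues) * Uᴴ := by
    rw [← Matrix.star_eq_conjTranspose]; exact hA.spectral_theorem
  set s : n → ℂ := fun i => if 0 ≤ hA.eigenvalues i then 1 else -1 with hs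
  refine ⟨U * Matrix.diagonal s * Uᴴ, contraction_unitary_conj hU hU' ?_, ?_⟩
  · intro i
    by_cases hi : 0 ≤ hA.eigenvalues i <;> simp [hs, hi]
  · have hCA : U * Matrix.diagonal s * Uᴴ * A
        = U * Matrix.diagonal (fun i => s i * (hA.eigenvalues i : ℂ)) * Uᴴ := by
      conv_lhs => rw [hspec]
      rw [show U * Matrix.diagonal s * Uᴴ *
            (U * Matrix.diagonal (RCLike.ofReal ∘ hA.eigenvalues) * Uᴴ)
          = U * (Matrix.diagonal s * (Uᴴ * U) *
            Matrix.diagonal (RCLike.ofReal ∘ hA.eigenvalues)) * Uᴴ from by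
        simp only [Matrix.mul_assoc]]
      rw [hU, Matrix.mul_one, Matrix.diagonal_mul_diagonal]
      rfl
    rw [hCA, Matrix.trace_mul_cycle, hU, Matrix.one_mul, Matrix.trace_diagonal,
      Complex.re_sum, traceNorm_eq_sum_abs hA]
    apply Finset.sum_congr rfl
    intro i _
    by_cases hi : 0 ≤ hA.eigenvalues i
    · simp [hs, hi, abs_of_nonneg hi]
    · push_neg at hi
      simp only [hs, not_le.mpr hi, if_false, neg_one_mul, Complex.neg_re,
        Complex.ofReal_re, abs_of_neg hi]

lemma traceNorm_sub_le {X Y : Matrix n n ℂ} (hX : X.IsHermitian) (hY : Y.IsHermitian) :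
    traceNorm (X - Y) ≤ traceNorm X + traceNorm Y := by
  obtain ⟨C, hC, hCeq⟩ := exists_contraction_trace_eq (hX.sub hY)
  rw [← hCeq, Matrix.mul_sub, Matrix.trace_sub, Complex.sub_re]
  have h1 := re_trace_contraction_le hX hC
  have h2 := re_trace_contraction_le hY hC.neg
  rw [Matrix.neg_mul, Matrix.trace_neg, Complex.neg_re] at h2
  linarith

lemma herm_eq_sum_outer {M : Matrix n n ℂ} (hM : M.IsHermitian) :
    M = ∑ p, (hM.eigenvalues p : ℂ) •
      Matrix.of (fun q q' : n => (Matrix.IsHermitian.eigenvectorUnitary hM : Matrix n n ℂ) q p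
        * star ((Matrix.IsHermitian.eigenvectorUnitary hM : Matrix n n ℂ) q' p)) := by
  set U : Matrix n n ℂ := (Matrix.IsHermitian.eigenvectorUnitary hM : Matrix n n ℂ) with hUdef
  have hspec : M = U * Matrix.diagonal (RCLike.ofReal ∘ hM.eigenvalues) * Uᴴ := by
    rw [← Matrix.star_eq_conjTranspose]; exact hM.spectral_theorem
  ext q q'
  conv_lhs => rw [hspec]
  rw [Matrix.mul_apply, Matrix.sum_apply]
  apply Finset.sum_congr rfl
  intro p _
  rw [Matrix.mul_diagonal, Matrix.conjTranspose_apply]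
  simp only [Matrix.smul_apply, Matrix.of_apply, Function.comp_apply, smul_eq_mul]
  rw [mul_right_comm, mul_comm]
  rfl

lemma contraction_of_frobenius {R : Matrix n n ℂ}
    (h : ∑ j, ∑ a, Complex.normSq (R j a) ≤ 1) : Contraction R := by
  intro x
  rw [vsq_eq_sum]
  have hterm : ∀ j, Complex.normSq ((R *ᵥ x) j)
      ≤ (∑ a, Complex.normSq (R j a)) * vsq x := by
    intro j
    have h1 : (R *ᵥ x) j = dotProduct (star (star (R j))) x := by
      rw [star_star]; rfl
    have h2 := cauchy_schwarz_dot (star (R j)) x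
    rw [← h1] at h2
    have h3 : vsq (star (R j)) = ∑ a, Complex.normSq (R j a) := by
      rw [vsq_eq_sum]; apply Finset.sum_congr rfl; intro a _; simp
    have h4 : Complex.normSq ((R *ᵥ x) j) = (‖(R *ᵥ x) j‖)^2 :=
      (Complex.sq_norm _).symm
    rw [h4]
    calc (‖(R *ᵥ x) j‖)^2
        ≤ (Real.sqrt (vsq (star (R j))) * Real.sqrt (vsq x))^2 := by
          apply pow_le_pow_left₀ (norm_nonneg _) h2
      _ = vsq (star (R j)) * vsq x := by
          rw [mul_pow, Real.sq_sqrt (vsq_nonneg _), Real.sq_sqrt (vsq_nonneg _)]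
      _ = _ := by rw [h3]
  calc ∑ j, Complex.normSq ((R *ᵥ x) j)
      ≤ ∑ j, (∑ a, Complex.normSq (R j a)) * vsq x := Finset.sum_le_sum fun j _ => hterm j
    _ = (∑ j, ∑ a, Complex.normSq (R j a)) * vsq x := by rw [Finset.sum_mul]
    _ ≤ 1 * vsq x := mul_le_mul_of_nonneg_right h (vsq_nonneg x)
    _ = vsq x := one_mul _

lemma posSemidef_real_smul {A : Matrix n n ℂ} (hA : A.PosSemidef) {c : ℝ} (hc : 0 ≤ c) :
    (((c : ℂ)) • A).PosSemidef := by
  constructor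
  · unfold Matrix.IsHermitian
    rw [Matrix.conjTranspose_smul, hA.1.eq]
    congr 1
    exact Complex.conj_ofReal c
  · intro x
    exact (hA.smul (Complex.zero_le_real.mpr hc)).2 x

end general

section kron
variable {ι κ α : Type*} [Fintype ι] [DecidableEq ι] [Fintype κ] [Fintype α] [DecidableEq α]

lemma kron_conjTranspose {l m p q : Type*} [Fintype m] [Fintype q]
    (A : Matrix l m ℂ) (B : Matrix p q ℂ) : (A ⊗ₖ B)ᴴ = Aᴴ ⊗ₖ Bᴴ := by
  ext ⟨i, j⟩ ⟨k, l'⟩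
  simp [Matrix.conjTranspose_apply, Matrix.kroneckerMap_apply, star_mul', mul_comm]

lemma sum_kron {p a b c e : Type*} [Fintype p] (f : p → Matrix a b ℂ) (B : Matrix c e ℂ) :
    (∑ x, f x) ⊗ₖ B = ∑ x, (f x ⊗ₖ B) := by
  ext ⟨i, j⟩ ⟨k, l⟩
  simp [Matrix.sum_apply, Matrix.kroneckerMap_apply, Finset.sum_mul]

lemma contraction_one_kron {R : Matrix ι ι ℂ} (hR : Contraction R) :
    Contraction ((1 : Matrix α α ℂ) ⊗ₖ R) := by
  intro x
  have hmv : ∀ a j, ((((1 : Matrix α α ℂ) ⊗ₖ R)) *ᵥ x) (a, j)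
      = (R *ᵥ fun i => x (a, i)) j := by
    intro a j
    simp only [Matrix.mulVec, dotProduct, Fintype.sum_prod_type,
      Matrix.kroneckerMap_apply, Matrix.one_apply, ite_mul, one_mul, zero_mul]
    rw [Finset.sum_eq_single a]
    · simp
    · intro b _ hb
      apply Finset.sum_eq_zero
      intro i _
      rw [if_neg (fun h => hb h.symm)]
    · intro h; exact absurd (Finset.mem_univ a) h
  have h1 : vsq ((((1 : Matrix α α ℂ) ⊗ₖ R)) *ᵥ x)
      = ∑ a, vsq (R *ᵥ fun i => x (a, i)) := by
    rw [vsq_eq_sum, Fintype.sum_prod_type]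
    apply Finset.sum_congr rfl
    intro a _
    rw [vsq_eq_sum]
    apply Finset.sum_congr rfl
    intro j _
    rw [hmv]
  have h2 : vsq x = ∑ a, vsq (fun i => x (a, i)) := by
    rw [vsq_eq_sum, Fintype.sum_prod_type]
    apply Finset.sum_congr rfl
    intro a _
    rw [vsq_eq_sum]
  rw [h1, h2]
  exact Finset.sum_le_sum fun a _ => hR _

/-- the unnormalized maximally-entangled projector -/
noncomputable def Wmat (ι : Type*) [Fintype ι] [DecidableEq ι] : Matrix (ι × ι) (ι × ι) ℂ :=
  ∑ i, ∑ j, Matrix.single i j (1 : ℂ) ⊗ₖ Matrix.single i j (1 : ℂ)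

lemma Wmat_apply (p q : ι × ι) :
    Wmat ι p q = (if p.1 = p.2 then (1:ℂ) else 0) * (if q.1 = q.2 then 1 else 0) := by
  unfold Wmat
  simp only [Matrix.sum_apply, Matrix.kroneckerMap_apply, Matrix.single,
    Matrix.of_apply]
  rw [Finset.sum_eq_single p.1]
  · rw [Finset.sum_eq_single q.1]
    · by_cases h1 : p.1 = p.2 <;> by_cases h2 : q.1 = q.2 <;>
        simp [h1, h2, eq_comm]
    · intro j _ hj
      rw [if_neg (fun h => hj h.2), zero_mul]
    · intro hq; exact absurd (Finset.mem_univ q.1) hq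
  · intro i _ hi
    apply Finset.sum_eq_zero
    intro j _
    rw [if_neg (fun h => hi h.1), zero_mul]
  · intro hp; exact absurd (Finset.mem_univ p.1) hp

noncomputable def colW (ι : Type*) [Fintype ι] [DecidableEq ι] : Matrix (ι × ι) Unit ℂ :=
  Matrix.of fun p _ => if p.1 = p.2 then 1 else 0

lemma Wmat_eq_col : Wmat ι = colW ι * (colW ι)ᴴ := by
  ext p q
  rw [Wmat_apply, Matrix.mul_apply]
  simp [colW, Matrix.conjTranspose_apply, apply_ite (star : ℂ → ℂ)]

lemma Wmat_posSemidef : (Wmat ι).PosSemidef := by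
  rw [Wmat_eq_col]
  exact Matrix.posSemidef_self_mul_conjTranspose _

lemma Wmat_trace : (Wmat ι).trace = (Fintype.card ι : ℂ) := by
  rw [Matrix.trace]
  simp only [Matrix.diag_apply, Wmat_apply]
  rw [Fintype.sum_prod_type]
  simp [Finset.sum_ite_eq, Finset.mem_univ]

end kron
end QCap

namespace QCap
open Matrix Kronecker
section ext
variable {ι κ α : Type*} [Fintype ι] [DecidableEq ι] [Fintype κ] [Fintype α] [DecidableEq α]

lemma extApply_smul (K : κ → Matrix α ι ℂ) (c : ℂ) (M : Matrix (ι × ι) (ι × ι) ℂ) :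
    extApply K (c • M) = c • extApply K M := by
  unfold extApply
  rw [Finset.smul_sum]
  apply Finset.sum_congr rfl
  intro k _
  rw [Matrix.mul_smul, Matrix.smul_mul]

lemma extApply_sum {p : Type*} [Fintype p] (K : κ → Matrix α ι ℂ)
    (f : p → Matrix (ι × ι) (ι × ι) ℂ) :
    extApply K (∑ x, f x) = ∑ x, extApply K (f x) := by
  unfold extApply
  rw [Finset.sum_comm]
  apply Finset.sum_congr rfl
  intro k _
  rw [Matrix.mul_sum, Matrix.sum_mul]

lemma extApply_posSemidef (K : κ → Matrix α ι ℂ) {M : Matrix (ι × ι) (ι × ι) ℂ}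
    (hM : M.PosSemidef) : (extApply K M).PosSemidef := by
  unfold extApply
  have h : ∀ s : Finset κ,
      (∑ k ∈ s, (K k ⊗ₖ (1 : Matrix ι ι ℂ)) * M * (K k ⊗ₖ (1 : Matrix ι ι ℂ))ᴴ).PosSemidef := by
    intro s
    induction s using Finset.induction with
    | empty => simpa using Matrix.PosSemidef.zero
    | insert _ _ h ih =>
        rw [Finset.sum_insert h]
        exact (hM.mul_mul_conjTranspose_same _).add ih
  exact h _

lemma kron_one_comm {β γ : Type*} [Fintype β] [DecidableEq β] [Fintype γ] [DecidableEq γ]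
    (T : Matrix β γ ℂ) (S : Matrix ι ι ℂ) :
    (T ⊗ₖ (1 : Matrix ι ι ℂ)) * ((1 : Matrix γ γ ℂ) ⊗ₖ S)
      = ((1 : Matrix β β ℂ) ⊗ₖ S) * (T ⊗ₖ (1 : Matrix ι ι ℂ)) := by
  rw [← Matrix.mul_kronecker_mul, ← Matrix.mul_kronecker_mul]
  simp

lemma extApply_conj_comm (K : κ → Matrix α ι ℂ) (R : Matrix ι ι ℂ)
    (M : Matrix (ι × ι) (ι × ι) ℂ) :
    extApply K (((1 : Matrix ι ι ℂ) ⊗ₖ R) * M * ((1 : Matrix ι ι ℂ) ⊗ₖ R)ᴴ)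
      = ((1 : Matrix α α ℂ) ⊗ₖ R) * extApply K M * ((1 : Matrix α α ℂ) ⊗ₖ R)ᴴ := by
  unfold extApply
  rw [Finset.mul_sum, Finset.sum_mul]
  apply Finset.sum_congr rfl
  intro k _
  simp only [kron_conjTranspose, Matrix.conjTranspose_one]
  calc (K k ⊗ₖ (1:Matrix ι ι ℂ)) * (((1:Matrix ι ι ℂ) ⊗ₖ R) * M * ((1:Matrix ι ι ℂ) ⊗ₖ Rᴴ)) *
        ((K k)ᴴ ⊗ₖ (1:Matrix ι ι ℂ))
      = ((K k ⊗ₖ (1:Matrix ι ι ℂ)) * ((1:Matrix ι ι ℂ) ⊗ₖ R)) * M *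
        (((1:Matrix ι ι ℂ) ⊗ₖ Rᴴ) * ((K k)ᴴ ⊗ₖ (1:Matrix ι ι ℂ))) := by
        simp only [Matrix.mul_assoc]
    _ = (((1:Matrix α α ℂ) ⊗ₖ R) * (K k ⊗ₖ (1:Matrix ι ι ℂ))) * M *
        (((K k)ᴴ ⊗ₖ (1:Matrix ι ι ℂ)) * ((1:Matrix α α ℂ) ⊗ₖ Rᴴ)) := by
        rw [kron_one_comm (K k) R, ← kron_one_comm ((K k)ᴴ) Rᴴ]
    _ = _ := by simp only [Matrix.mul_assoc]

lemma extApply_Wmat (K : κ → Matrix α ι ℂ) :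
    extApply K (Wmat ι) = ∑ i, ∑ j,
      (channelApply K (Matrix.single i j 1)) ⊗ₖ (Matrix.single i j 1) := by
  unfold extApply Wmat channelApply
  have step : ∀ k, (K k ⊗ₖ (1:Matrix ι ι ℂ)) *
        (∑ i, ∑ j, (Matrix.single i j (1:ℂ) : Matrix ι ι ℂ) ⊗ₖ (Matrix.single i j (1:ℂ) : Matrix ι ι ℂ)) *
        (K k ⊗ₖ (1:Matrix ι ι ℂ))ᴴ
      = ∑ i, ∑ j, (K k * (Matrix.single i j (1:ℂ) : Matrix ι ι ℂ) * (K k)ᴴ) ⊗ₖ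
          (Matrix.single i j (1:ℂ) : Matrix ι ι ℂ) := by
    intro k
    rw [Matrix.mul_sum, Matrix.sum_mul]
    apply Finset.sum_congr rfl; intro i _
    rw [Matrix.mul_sum, Matrix.sum_mul]
    apply Finset.sum_congr rfl; intro j _
    rw [kron_conjTranspose, Matrix.conjTranspose_one, ← Matrix.mul_kronecker_mul,
      ← Matrix.mul_kronecker_mul]
    simp
  rw [Finset.sum_congr rfl fun k _ => step k]
  rw [Finset.sum_comm]
  apply Finset.sum_congr rfl; intro i _
  rw [Finset.sum_comm]
  apply Finset.sum_congr rfl; intro j _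
  rw [← sum_kron]

lemma choiState_eq (K : κ → Matrix α ι ℂ) :
    choiState K = ((Fintype.card ι : ℂ))⁻¹ • extApply K (Wmat ι) := by
  unfold choiState
  rw [extApply_Wmat]

lemma trace_extApply {K : κ → Matrix α ι ℂ} (hK : IsKraus K) (M : Matrix (ι × ι) (ι × ι) ℂ) :
    (extApply K M).trace = M.trace := by
  unfold extApply
  rw [Matrix.trace_sum]
  have h1 : ∀ k, ((K k ⊗ₖ (1:Matrix ι ι ℂ)) * M * (K k ⊗ₖ (1:Matrix ι ι ℂ))ᴴ).trace
      = ((((K k)ᴴ * K k) ⊗ₖ (1:Matrix ι ι ℂ)) * M).trace := by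
    intro k
    rw [Matrix.trace_mul_cycle]
    congr 1
    rw [kron_conjTranspose, Matrix.conjTranspose_one, ← Matrix.mul_kronecker_mul]
    simp
  rw [Finset.sum_congr rfl fun k _ => h1 k, ← Matrix.trace_sum, ← Matrix.sum_mul, ← sum_kron,
    hK, Matrix.one_kronecker_one, Matrix.one_mul]

lemma col_mul_colW {U : Matrix (ι × ι) (ι × ι) ℂ} (p : ι × ι) :
    ((1 : Matrix ι ι ℂ) ⊗ₖ Matrix.of (fun j a : ι => U (a, j) p)) * colW ι
      = Matrix.of (fun (q : ι × ι) (_ : Unit) => U q p) := by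
  ext ⟨a, x⟩ u
  rw [Matrix.mul_apply, Fintype.sum_prod_type]
  rw [Finset.sum_eq_single a]
  · rw [Finset.sum_eq_single a]
    · simp [Matrix.kroneckerMap_apply, Matrix.one_apply, colW]
    · intro p' _ hp'
      have : colW ι (a, p') u = 0 := by
        simp only [colW, Matrix.of_apply]
        exact if_neg (fun h => hp' h.symm)
      rw [this, mul_zero]
    · intro h; exact absurd (Finset.mem_univ a) h
  · intro i _ hi
    apply Finset.sum_eq_zero
    intro p' _
    have : ((1 : Matrix ι ι ℂ) ⊗ₖ Matrix.of (fun j a : ι => U (a, j) p)) (a, x) (i, p') = 0 := by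
      simp only [Matrix.kroneckerMap_apply, Matrix.one_apply]
      rw [if_neg (fun h => hi h.symm), zero_mul]
    rw [this, zero_mul]
  · intro h; exact absurd (Finset.mem_univ a) h

lemma outer_eq_conj_W {U : Matrix (ι × ι) (ι × ι) ℂ} (p : ι × ι) :
    Matrix.of (fun q q' : ι × ι => U q p * star (U q' p))
      = ((1 : Matrix ι ι ℂ) ⊗ₖ Matrix.of (fun j a : ι => U (a, j) p)) * Wmat ι *
        ((1 : Matrix ι ι ℂ) ⊗ₖ Matrix.of (fun j a : ι => U (a, j) p))ᴴ := by
  set P := (1 : Matrix ι ι ℂ) ⊗ₖ Matrix.of (fun j a : ι => U (a, j) p) with hP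
  have h1 : P * Wmat ι * Pᴴ = (P * colW ι) * (P * colW ι)ᴴ := by
    rw [Wmat_eq_col, Matrix.conjTranspose_mul]
    simp only [Matrix.mul_assoc]
  rw [h1, col_mul_colW]
  ext q q'
  rw [Matrix.mul_apply]
  simp [Matrix.conjTranspose_apply]

end ext
end QCap

open Kronecker

open QCap Matrix in
/-- relation between the diamond distance of two channels and the
trace distance of their Choi states. -/
theorem diamond_vs_choi {ι κ κ' α : Type*} [Fintype ι] [DecidableEq ι] [Nonempty ι]
    [Fintype κ] [Fintype κ'] [Fintype α] [DecidableEq α]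
    (K : κ → Matrix α ι ℂ) (L : κ' → Matrix α ι ℂ) (hK : IsKraus K) (hL : IsKraus L) :
    (2 * (Fintype.card ι : ℝ))⁻¹ * diamondDist K L ≤ traceDist (choiState K) (choiState L) ∧
      traceDist (choiState K) (choiState L) ≤ (1 / 2) * diamondDist K L := by
  classical
  have hd0 : 0 < Fintype.card ι := Fintype.card_pos
  have hdC0 : (Fintype.card ι : ℂ) ≠ 0 := Nat.cast_ne_zero.mpr hd0.ne'
  set M₀ : Matrix (ι × ι) (ι × ι) ℂ := ((Fintype.card ι : ℂ))⁻¹ • Wmat ι with hM₀def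
  have hM₀psd : M₀.PosSemidef := by
    have he : ((Fintype.card ι : ℂ))⁻¹ = (((Fintype.card ι : ℝ)⁻¹ : ℝ) : ℂ) := by
      push_cast
      rfl
    rw [hM₀def, he]
    exact posSemidef_real_smul Wmat_posSemidef (by positivity)
  have hM₀ : IsDensity M₀ := by
    refine ⟨hM₀psd, ?_⟩
    rw [hM₀def, Matrix.trace_smul, Wmat_trace, smul_eq_mul, inv_mul_cancel₀ hdC0]
  have hchoiK : choiState K = extApply K M₀ := by
    rw [choiState_eq, hM₀def, extApply_smul]
  have hchoiL : choiState L = extApply L M₀ := by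
    rw [choiState_eq, hM₀def, extApply_smul]
  set S : Set ℝ := {x | ∃ M : Matrix (ι × ι) (ι × ι) ℂ, IsDensity M ∧
    x = traceNorm (extApply K M - extApply L M)} with hSdef
  have hDD : diamondDist K L = sSup S := rfl
  have hmem : traceNorm (extApply K M₀ - extApply L M₀) ∈ S := ⟨M₀, hM₀, rfl⟩
  have hbdd : BddAbove S := by
    refine ⟨2, ?_⟩
    rintro x ⟨M, hM, rfl⟩
    have hKp := extApply_posSemidef K hM.1
    have hLp := extApply_posSemidef L hM.1
    calc traceNorm (extApply K M - extApply L M)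
        ≤ traceNorm (extApply K M) + traceNorm (extApply L M) :=
          traceNorm_sub_le hKp.1 hLp.1
      _ = (extApply K M).trace.re + (extApply L M).trace.re := by
          rw [traceNorm_psd_eq_trace_re hKp, traceNorm_psd_eq_trace_re hLp]
      _ = 2 := by rw [trace_extApply hK, trace_extApply hL, hM.2]; norm_num
  -- choi states are PSD, so their difference is Hermitian
  have hcKpsd : (choiState K).PosSemidef := by
    rw [hchoiK]; exact extApply_posSemidef K hM₀psd
  have hcLpsd : (choiState L).PosSemidef := by
    rw [hchoiL]; exact extApply_posSemidef L hM₀psd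
  have hYherm : (choiState K - choiState L).IsHermitian := hcKpsd.1.sub hcLpsd.1
  -- main estimate for the lower bound
  have hmain : ∀ x ∈ S, x ≤ (Fintype.card ι : ℝ) * traceNorm (choiState K - choiState L) := by
    rintro x ⟨M, hM, rfl⟩
    have hKp := extApply_posSemidef K hM.1
    have hLp := extApply_posSemidef L hM.1
    have hherm : (extApply K M - extApply L M).IsHermitian := hKp.1.sub hLp.1
    obtain ⟨C, hC, hCeq⟩ := exists_contraction_trace_eq hherm
    have hMh : M.IsHermitian := hM.1.1
    set U : Matrix (ι × ι) (ι × ι) ℂ :=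
      (Matrix.IsHermitian.eigenvectorUnitary hMh : Matrix (ι × ι) (ι × ι) ℂ) with hUdef
    obtain ⟨hU1, hU2⟩ := unitary_conj_props hMh
    -- column norms of U
    have hcolnorm : ∀ p : ι × ι, ∑ q : ι × ι, Complex.normSq (U q p) = 1 := by
      intro p
      have h1 : (Uᴴ * U) p p = ∑ q, (Complex.normSq (U q p) : ℂ) := by
        rw [Matrix.mul_apply]
        apply Finset.sum_congr rfl
        intro q _
        simp [Matrix.conjTranspose_apply, Complex.normSq_eq_conj_mul_self]
      have h2 : (Uᴴ * U) p p = 1 := by rw [hU1]; simp [Matrix.one_apply]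
      have h3 : ∑ q : ι × ι, (Complex.normSq (U q p) : ℂ) = 1 := by rw [← h1, h2]
      have h4 := congrArg Complex.re h3
      rw [Complex.re_sum] at h4
      simpa using h4
    set Rf : (ι × ι) → Matrix ι ι ℂ := fun p => Matrix.of (fun j a : ι => U (a, j) p) with hRf
    have hfrob : ∀ p : ι × ι, ∑ j, ∑ a, Complex.normSq (Rf p j a) = 1 := by
      intro p
      rw [Finset.sum_comm]
      calc ∑ a, ∑ j, Complex.normSq (Rf p j a)
          = ∑ q : ι × ι, Complex.normSq (U q p) := by
            rw [Fintype.sum_prod_type]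
            rfl
        _ = 1 := hcolnorm p
    have hRcontr : ∀ p, Contraction (Rf p) := fun p =>
      contraction_of_frobenius (le_of_eq (hfrob p))
    have hRHcontr : ∀ p, Contraction ((Rf p)ᴴ) := by
      intro p
      apply contraction_of_frobenius
      apply le_of_eq
      calc ∑ a, ∑ j, Complex.normSq ((Rf p)ᴴ a j)
          = ∑ a, ∑ j, Complex.normSq (Rf p j a) := by
            apply Finset.sum_congr rfl; intro a _
            apply Finset.sum_congr rfl; intro j _
            simp only [Matrix.conjTranspose_apply, RCLike.star_def, Complex.normSq_conj]
        _ = ∑ j, ∑ a, Complex.normSq (Rf p j a) := Finset.sum_comm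
        _ = 1 := hfrob p
    -- extApply of Wmat in terms of choi states
    have hKW : extApply K (Wmat ι) = (Fintype.card ι : ℂ) • choiState K := by
      rw [choiState_eq, smul_smul, mul_inv_cancel₀ hdC0, one_smul]
    have hLW : extApply L (Wmat ι) = (Fintype.card ι : ℂ) • choiState L := by
      rw [choiState_eq, smul_smul, mul_inv_cancel₀ hdC0, one_smul]
    -- the key per-eigenvector identity
    have hDOp : ∀ p : ι × ι,
        extApply K (Matrix.of (fun q q' : ι × ι => U q p * star (U q' p)))
          - extApply L (Matrix.of (fun q q' : ι × ι => U q p * star (U q' p)))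
        = ((1 : Matrix α α ℂ) ⊗ₖ Rf p) *
            ((Fintype.card ι : ℂ) • (choiState K - choiState L)) *
            ((1 : Matrix α α ℂ) ⊗ₖ Rf p)ᴴ := by
      intro p
      rw [outer_eq_conj_W (U := U) p, extApply_conj_comm, extApply_conj_comm, hKW, hLW,
        ← Matrix.sub_mul, ← Matrix.mul_sub, ← smul_sub]
    -- decomposition of the difference
    have hdec : extApply K M - extApply L M = ∑ p : ι × ι, (hMh.eigenvalues p : ℂ) •
        (((1 : Matrix α α ℂ) ⊗ₖ Rf p) *
          ((Fintype.card ι : ℂ) • (choiState K - choiState L)) *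
          ((1 : Matrix α α ℂ) ⊗ₖ Rf p)ᴴ) := by
      conv_lhs => rw [herm_eq_sum_outer hMh]
      rw [extApply_sum, extApply_sum, ← Finset.sum_sub_distrib]
      apply Finset.sum_congr rfl
      intro p _
      rw [extApply_smul, extApply_smul, ← smul_sub, hDOp p]
    -- trace computation
    have htr2 : (Matrix.trace (C * (extApply K M - extApply L M))).re
        = ∑ p : ι × ι, (hMh.eigenvalues p * (Fintype.card ι : ℝ)) *
            (Matrix.trace ((((1 : Matrix α α ℂ) ⊗ₖ Rf p)ᴴ * C * ((1 : Matrix α α ℂ) ⊗ₖ Rf p)) *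
              (choiState K - choiState L))).re := by
      rw [hdec, Matrix.mul_sum, Matrix.trace_sum, Complex.re_sum]
      apply Finset.sum_congr rfl
      intro p _
      have e1 : ((1 : Matrix α α ℂ) ⊗ₖ Rf p) *
            ((Fintype.card ι : ℂ) • (choiState K - choiState L)) *
            ((1 : Matrix α α ℂ) ⊗ₖ Rf p)ᴴ
          = (Fintype.card ι : ℂ) • (((1 : Matrix α α ℂ) ⊗ₖ Rf p) *
              (choiState K - choiState L) * ((1 : Matrix α α ℂ) ⊗ₖ Rf p)ᴴ) := by
        rw [Matrix.mul_smul, Matrix.smul_mul]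
      rw [e1, smul_smul, Matrix.mul_smul, Matrix.trace_smul, smul_eq_mul]
      have e3 : Matrix.trace (C * (((1 : Matrix α α ℂ) ⊗ₖ Rf p) *
            (choiState K - choiState L) * ((1 : Matrix α α ℂ) ⊗ₖ Rf p)ᴴ))
          = Matrix.trace ((((1 : Matrix α α ℂ) ⊗ₖ Rf p)ᴴ * C * ((1 : Matrix α α ℂ) ⊗ₖ Rf p)) *
              (choiState K - choiState L)) := by
        rw [show C * (((1 : Matrix α α ℂ) ⊗ₖ Rf p) * (choiState K - choiState L) *
              ((1 : Matrix α α ℂ) ⊗ₖ Rf p)ᴴ)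
            = (C * ((1 : Matrix α α ℂ) ⊗ₖ Rf p) * (choiState K - choiState L)) *
              ((1 : Matrix α α ℂ) ⊗ₖ Rf p)ᴴ from by simp only [Matrix.mul_assoc]]
        rw [Matrix.trace_mul_comm]
        rw [show ((1 : Matrix α α ℂ) ⊗ₖ Rf p)ᴴ *
              (C * ((1 : Matrix α α ℂ) ⊗ₖ Rf p) * (choiState K - choiState L))
            = (((1 : Matrix α α ℂ) ⊗ₖ Rf p)ᴴ * C * ((1 : Matrix α α ℂ) ⊗ₖ Rf p)) *
              (choiState K - choiState L) from by simp only [Matrix.mul_assoc]]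
      rw [e3]
      have e4 : (hMh.eigenvalues p : ℂ) * (Fintype.card ι : ℂ)
          = (((hMh.eigenvalues p * (Fintype.card ι : ℝ)) : ℝ) : ℂ) := by
        push_cast
        ring
      rw [e4, Complex.re_ofReal_mul]
    -- contraction property of the conjugated operators
    have hDcontr : ∀ p, Contraction (((1 : Matrix α α ℂ) ⊗ₖ Rf p)ᴴ * C *
        ((1 : Matrix α α ℂ) ⊗ₖ Rf p)) := by
      intro p
      have h1 : Contraction ((1 : Matrix α α ℂ) ⊗ₖ Rf p) := contraction_one_kron (hRcontr p)
      have h2 : Contraction (((1 : Matrix α α ℂ) ⊗ₖ Rf p)ᴴ) := by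
        rw [kron_conjTranspose, Matrix.conjTranspose_one]
        exact contraction_one_kron (hRHcontr p)
      exact (h2.mul hC).mul h1
    -- eigenvalues sum to one
    have hsum1 : ∑ p : ι × ι, hMh.eigenvalues p = 1 := by
      have h1 := trace_eq_sum_eig hMh
      rw [hM.2] at h1
      have h4 := congrArg Complex.re h1.symm
      rw [Complex.re_sum] at h4
      simpa using h4
    calc traceNorm (extApply K M - extApply L M)
        = (Matrix.trace (C * (extApply K M - extApply L M))).re := hCeq.symm
      _ = ∑ p : ι × ι, (hMh.eigenvalues p * (Fintype.card ι : ℝ)) *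
            (Matrix.trace ((((1 : Matrix α α ℂ) ⊗ₖ Rf p)ᴴ * C * ((1 : Matrix α α ℂ) ⊗ₖ Rf p)) *
              (choiState K - choiState L))).re := htr2
      _ ≤ ∑ p : ι × ι, (hMh.eigenvalues p * (Fintype.card ι : ℝ)) *
            traceNorm (choiState K - choiState L) := by
          apply Finset.sum_le_sum
          intro p _
          apply mul_le_mul_of_nonneg_left
            (re_trace_contraction_le hYherm (hDcontr p))
            (mul_nonneg (hM.1.eigenvalues_nonneg p) (Nat.cast_nonneg _))
      _ = (Fintype.card ι : ℝ) * traceNorm (choiState K - choiState L) := by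
          rw [← Finset.sum_mul, ← Finset.sum_mul, hsum1, one_mul]
  have hlow : diamondDist K L ≤ (Fintype.card ι : ℝ) * traceNorm (choiState K - choiState L) := by
    rw [hDD]
    exact csSup_le ⟨_, hmem⟩ hmain
  have hd' : (0:ℝ) < (Fintype.card ι : ℝ) := by exact_mod_cast hd0
  constructor
  · unfold traceDist
    calc (2 * (Fintype.card ι : ℝ))⁻¹ * diamondDist K L
        ≤ (2 * (Fintype.card ι : ℝ))⁻¹ *
            ((Fintype.card ι : ℝ) * traceNorm (choiState K - choiState L)) := by
          apply mul_le_mul_of_nonneg_left hlow (by positivity)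
      _ = traceNorm (choiState K - choiState L) / 2 := by
          field_simp
  · unfold traceDist
    have h1 : traceNorm (choiState K - choiState L) ≤ sSup S := by
      rw [hchoiK, hchoiL]
      exact le_csSup hbdd hmem
    rw [hDD]
    linarith
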